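/- Let X be a real Banach space with a normalized 1-symmetric basis (e_n). For f ∈ L¹(0,1) let F(t) = ∫_0^t f dμ be its indefinite integral. Then ‖f‖_{JF_X} = ‖F‖_{V_X}; that is, the supremum over all finite families of pairwise disjoint open subintervals I_1,…,I_m of (0,1) of ‖Σ_j (∫_{I_j} f dμ) e_j‖_X equals the supremum over all partitions 0 = t_0 < t_1 < … < t_n = 1 of ‖Σ_{i=0}^{n−1} (F(t_{i+1}) − F(t_i)) e_i‖_X. Consequently the Volterra operator f ↦ F extends to an isometry of JF_X onto V_X^0. -/

import Mathlib

open MeasureTheory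

noncomputable section

/-- Auxiliary: a `Fin n`-tuple as a finitely supported function on `ℕ`. -/
def JFaux.finTuple (n : ℕ) (d : Fin n → ℝ) : ℕ →₀ ℝ :=
  Finsupp.onFinset (Finset.range n) (fun i => if h : i < n then d ⟨i, h⟩ else 0)
    (fun i hi => Finset.mem_range.2 (by by_contra h; exact hi (dif_neg h)))

lemma JFaux.finTuple_sum {X : Type*} [AddCommGroup X] {n : ℕ} (d : Fin n → ℝ)
    (g : ℕ → ℝ → X) (hg : ∀ i, g i 0 = 0) :
    (JFaux.finTuple n d).sum g = ∑ i : Fin n, g i (d i) := by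
  rw [Finsupp.sum_of_support_subset _ (by simpa [JFaux.finTuple] using
        (Finsupp.support_onFinset_subset (s := Finset.range n))) _ (fun i _ => hg i)]
  rw [← Fin.sum_univ_eq_sum_range (fun i => g i (JFaux.finTuple n d i))]
  refine Finset.sum_congr rfl fun i _ => ?_
  simp [JFaux.finTuple, i.isLt]

lemma JFaux.drop_norm {X : Type*} [NormedAddCommGroup X] [NormedSpace ℝ X] (e : ℕ → X)
    (hsym : ∀ (a : ℕ →₀ ℝ) (π : Equiv.Perm ℕ) (ε : ℕ → ℝ), (∀ n, ε n = 1 ∨ ε n = -1) →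
      ‖a.sum fun n c => (ε n * c) • e (π n)‖ = ‖a.sum fun n c => c • e n‖)
    {n : ℕ} (d : Fin n → ℝ) (S : Finset (Fin n)) :
    ‖∑ i ∈ S, d i • e (i : ℕ)‖ ≤ ‖∑ i : Fin n, d i • e (i : ℕ)‖ := by
  classical
  set ε : ℕ → ℝ := fun i => if h : i < n then (if (⟨i, h⟩ : Fin n) ∈ S then 1 else -1) else 1
    with hε
  have hεs : ∀ i, ε i = 1 ∨ ε i = -1 := by
    intro i
    by_cases h : i < n
    · by_cases h2 : (⟨i, h⟩ : Fin n) ∈ S <;> simp [hε, h, h2]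
    · simp [hε, h]
  have key := hsym (JFaux.finTuple n d) 1 ε hεs
  rw [JFaux.finTuple_sum d _ (fun i => by simp),
      JFaux.finTuple_sum d _ (fun i => by simp)] at key
  have hεval : ∀ i : Fin n, ε (i : ℕ) = if i ∈ S then 1 else -1 := by
    intro i; simp [hε, i.isLt]
  have h2 : (∑ i : Fin n, d i • e (i : ℕ)) + ∑ i : Fin n, (ε (i : ℕ) * d i) • e ((1 : Equiv.Perm ℕ) (i : ℕ))
      = (2 : ℝ) • ∑ i ∈ S, d i • e (i : ℕ) := by
    rw [← Finset.sum_add_distrib]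
    have : ∀ i : Fin n, d i • e (i : ℕ) + (ε (i : ℕ) * d i) • e ((1 : Equiv.Perm ℕ) (i : ℕ))
        = if i ∈ S then (2 : ℝ) • (d i • e (i : ℕ)) else 0 := by
      intro i
      rw [hεval i]
      by_cases h : i ∈ S <;> simp [h, two_smul, neg_mul, neg_smul]
    rw [Finset.sum_congr rfl fun i _ => this i, Finset.sum_ite_mem, Finset.univ_inter,
        Finset.smul_sum]
  have hnorm : ‖∑ i : Fin n, (ε (i : ℕ) * d i) • e ((1 : Equiv.Perm ℕ) (i : ℕ))‖
      = ‖∑ i : Fin n, d i • e (i : ℕ)‖ := key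
  calc ‖∑ i ∈ S, d i • e (i : ℕ)‖
      = (2 : ℝ)⁻¹ * ‖(2 : ℝ) • ∑ i ∈ S, d i • e (i : ℕ)‖ := by
        rw [norm_smul, Real.norm_two]; ring
    _ = (2 : ℝ)⁻¹ * ‖(∑ i : Fin n, d i • e (i : ℕ))
          + ∑ i : Fin n, (ε (i : ℕ) * d i) • e ((1 : Equiv.Perm ℕ) (i : ℕ))‖ := by rw [h2]
    _ ≤ (2 : ℝ)⁻¹ * (‖∑ i : Fin n, d i • e (i : ℕ)‖
          + ‖∑ i : Fin n, (ε (i : ℕ) * d i) • e ((1 : Equiv.Perm ℕ) (i : ℕ))‖) := by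
        gcongr; exact norm_add_le _ _
    _ = ‖∑ i : Fin n, d i • e (i : ℕ)‖ := by rw [hnorm]; ring

lemma JFaux.perm_norm {X : Type*} [NormedAddCommGroup X] [NormedSpace ℝ X] (e : ℕ → X)
    (hsym : ∀ (a : ℕ →₀ ℝ) (π : Equiv.Perm ℕ) (ε : ℕ → ℝ), (∀ n, ε n = 1 ∨ ε n = -1) →
      ‖a.sum fun n c => (ε n * c) • e (π n)‖ = ‖a.sum fun n c => c • e n‖)
    {m : ℕ} (c : Fin m → ℝ) (ι : Fin m → ℕ) (hι : Function.Injective ι) :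
    ‖∑ j : Fin m, c j • e (ι j)‖ = ‖∑ j : Fin m, c j • e (j : ℕ)‖ := by
  classical
  obtain ⟨N, hmN, hιN⟩ : ∃ N, m ≤ N ∧ ∀ j, ι j < N :=
    ⟨m + (Finset.univ.sup ι) + 1, by omega, fun j => by
      have := Finset.le_sup (f := ι) (Finset.mem_univ j); omega⟩
  set f0 : {x : Fin N // (x : ℕ) < m} → Fin N := fun x => ⟨ι ⟨(x : Fin N), x.2⟩, hιN _⟩ with hf0def
  have hf0 : Function.Injective f0 := by
    intro x y hxy
    have h1 : ι ⟨(x : Fin N), x.2⟩ = ι ⟨(y : Fin N), y.2⟩ := by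
      simpa [hf0def, Fin.ext_iff] using hxy
    have := hι h1
    ext
    simpa [Fin.ext_iff] using this
  haveI : DecidablePred (fun y : Fin N => y ∈ Set.range f0) := Classical.decPred _
  set σ : Equiv.Perm (Fin N) := Equiv.extendSubtype (Equiv.ofInjective f0 hf0) with hσdef
  have hσ : ∀ (x : Fin N) (hx : (x : ℕ) < m), σ x = f0 ⟨x, hx⟩ := by
    intro x hx
    rw [hσdef, Equiv.extendSubtype_apply_of_mem _ x hx, Equiv.ofInjective_apply]
  set π : Equiv.Perm ℕ := σ.extendDomain (Fin.equivSubtype) with hπdef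
  have hπ : ∀ j : Fin m, π (j : ℕ) = ι j := by
    intro j
    have hj : (j : ℕ) < N := lt_of_lt_of_le j.isLt hmN
    rw [hπdef, Equiv.Perm.extendDomain_apply_subtype σ Fin.equivSubtype hj]
    have hsymm : (Fin.equivSubtype.symm ⟨(j : ℕ), hj⟩ : Fin N) = ⟨(j : ℕ), hj⟩ := rfl
    rw [hsymm, hσ ⟨(j : ℕ), hj⟩ j.isLt]
    simp [hf0def, Fin.equivSubtype]
  have key := hsym (JFaux.finTuple m c) π (fun _ => 1) (fun _ => Or.inl rfl)
  rw [JFaux.finTuple_sum c _ (fun i => by simp),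
      JFaux.finTuple_sum c _ (fun i => by simp)] at key
  simp only [one_mul] at key
  rw [← key]
  congr 1
  exact Finset.sum_congr rfl fun j _ => by rw [hπ j]

lemma JFaux.intF {f : ℝ → ℝ} (hf : IntegrableOn f (Set.Ioo (0:ℝ) 1)) {a b : ℝ}
    (ha : 0 ≤ a) (hab : a ≤ b) (hb : b ≤ 1) :
    ∫ x in Set.Ioo a b, f x
      = (∫ x in Set.Ioo (0:ℝ) b, f x) - ∫ x in Set.Ioo (0:ℝ) a, f x := by
  have hInt : ∀ {u v : ℝ}, 0 ≤ u → u ≤ v → v ≤ 1 → IntervalIntegrable f volume u v := by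
    intro u v hu huv hv
    rw [intervalIntegrable_iff_integrableOn_Ioo_of_le huv]
    exact hf.mono_set (Set.Ioo_subset_Ioo hu hv)
  have heq : ∀ {u v : ℝ}, u ≤ v → (∫ x in Set.Ioo u v, f x) = ∫ x in u..v, f x := by
    intro u v huv
    rw [intervalIntegral.integral_of_le huv, integral_Ioc_eq_integral_Ioo]
  rw [heq hab, heq ha, heq (ha.trans hab)]
  exact (intervalIntegral.integral_interval_sub_left
    (hInt le_rfl (ha.trans hab) hb) (hInt le_rfl ha (hab.trans hb))).symm


/-- `e` is a normalized 1-symmetric (Schauder) basis of `X`: each `e n` has norm one,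
its linear span is dense, and the norm of finite linear combinations is invariant under
permutations of the indices and changes of signs of the coefficients. -/
def IsSymmetricBasis {X : Type*} [NormedAddCommGroup X] [NormedSpace ℝ X] (e : ℕ → X) : Prop :=
  (∀ n, ‖e n‖ = 1) ∧
  Dense (Submodule.span ℝ (Set.range e) : Set X) ∧
  ∀ (a : ℕ →₀ ℝ) (π : Equiv.Perm ℕ) (ε : ℕ → ℝ), (∀ n, ε n = 1 ∨ ε n = -1) →
    ‖a.sum fun n c => (ε n * c) • e (π n)‖ = ‖a.sum fun n c => c • e n‖

/-- The `JF_X` norm of an integrable function on `(0,1)`: the supremum of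
`‖Σ_j (∫_{I_j} f dμ) e_j‖_X` over all finite families of pairwise disjoint open
subintervals of `(0,1)`. -/
def JFNorm1 {X : Type*} [NormedAddCommGroup X] [NormedSpace ℝ X]
    (e : ℕ → X) (f : ℝ → ℝ) : ℝ :=
  sSup { r | ∃ (m : ℕ) (a b : Fin m → ℝ),
    (∀ j, 0 ≤ a j ∧ a j < b j ∧ b j ≤ 1) ∧
    (Pairwise fun i j => Disjoint (Set.Ioo (a i) (b i)) (Set.Ioo (a j) (b j))) ∧
    r = ‖∑ j : Fin m, (∫ x in Set.Ioo (a j) (b j), f x) • e (j : ℕ)‖ }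

/-- The set of `X`-variations `α_X(g,P) = ‖Σ_i (g(t_{i+1}) - g(t_i)) e_i‖_X` of `g`
over all partitions `P = {0 = t_0 < t_1 < … < t_n = 1}` of `[0,1]`. -/
def VXSet {X : Type*} [NormedAddCommGroup X] [NormedSpace ℝ X]
    (e : ℕ → X) (g : ℝ → ℝ) : Set ℝ :=
  { r | ∃ (n : ℕ) (t : Fin (n + 1) → ℝ), StrictMono t ∧ t 0 = 0 ∧ t (Fin.last n) = 1 ∧
      r = ‖∑ i : Fin n, (g (t i.succ) - g (t i.castSucc)) • e (i : ℕ)‖ }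

/-- The `V_X` norm (total `X`-variation) of `g : [0,1] → ℝ`. -/
def VXNorm {X : Type*} [NormedAddCommGroup X] [NormedSpace ℝ X]
    (e : ℕ → X) (g : ℝ → ℝ) : ℝ :=
  sSup (VXSet e g)

/-- For `f ∈ L¹(0,1)` with indefinite integral `F(t) = ∫_0^t f dμ`,
`‖f‖_{JF_X} = ‖F‖_{V_X}`: the supremum of `‖Σ_j (∫_{I_j} f) e_j‖` over finite families
of pairwise disjoint open subintervals of `(0,1)` equals the supremum of
`‖Σ_i (F(t_{i+1}) - F(t_i)) e_i‖` over partitions `0 = t_0 < … < t_n = 1`.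
Consequently the Volterra operator extends to an isometry of `JF_X` onto `V_X^0`. -/
theorem JFX_norm_eq_VX_norm_of_indefinite_integral
    {X : Type*} [NormedAddCommGroup X] [NormedSpace ℝ X]
    (e : ℕ → X) (he : IsSymmetricBasis e)
    (f : ℝ → ℝ) (hf : IntegrableOn f (Set.Ioo (0 : ℝ) 1)) :
    JFNorm1 e f = VXNorm e (fun t => ∫ x in Set.Ioo (0 : ℝ) t, f x) := by
  classical
  obtain ⟨-, -, hsym⟩ := he
  rw [JFNorm1, VXNorm]
  set F : ℝ → ℝ := fun t => ∫ x in Set.Ioo (0:ℝ) t, f x with hFdef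
  set B := VXSet e F with hBdef
  set A := { r | ∃ (m : ℕ) (a b : Fin m → ℝ),
    (∀ j, 0 ≤ a j ∧ a j < b j ∧ b j ≤ 1) ∧
    (Pairwise fun i j => Disjoint (Set.Ioo (a i) (b i)) (Set.Ioo (a j) (b j))) ∧
    r = ‖∑ j : Fin m, (∫ x in Set.Ioo (a j) (b j), f x) • e (j : ℕ)‖ } with hAdef
  have hBA : B ⊆ A := by
    rintro r ⟨n, t, ht, ht0, htl, rfl⟩
    refine ⟨n, fun i => t i.castSucc, fun i => t i.succ, ?_, ?_, ?_⟩
    · intro j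
      refine ⟨?_, ht (Fin.castSucc_lt_succ (i := j)), ?_⟩
      · rw [← ht0]; exact ht.monotone (Fin.zero_le _)
      · rw [← htl]; exact ht.monotone (Fin.le_last _)
    · intro i j hne
      rcases hne.lt_or_gt with h | h
      · rw [Set.Ioo_disjoint_Ioo]
        calc min (t i.succ) (t j.succ) ≤ t i.succ := min_le_left _ _
          _ ≤ t j.castSucc := ht.monotone (by
              rw [Fin.le_def]
              have := Fin.lt_def.mp h
              simpa using this)
          _ ≤ max (t i.castSucc) (t j.castSucc) := le_max_right _ _
      · rw [Set.Ioo_disjoint_Ioo]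
        calc min (t i.succ) (t j.succ) ≤ t j.succ := min_le_right _ _
          _ ≤ t i.castSucc := ht.monotone (by
              rw [Fin.le_def]
              have := Fin.lt_def.mp h
              simpa using this)
          _ ≤ max (t i.castSucc) (t j.castSucc) := le_max_left _ _
    · congr 1
      refine Finset.sum_congr rfl fun i _ => ?_
      congr 1
      have h0 : (0:ℝ) ≤ t i.castSucc := by rw [← ht0]; exact ht.monotone (Fin.zero_le _)
      have h1 : t i.succ ≤ 1 := by rw [← htl]; exact ht.monotone (Fin.le_last _)
      rw [JFaux.intF hf h0 (ht (Fin.castSucc_lt_succ (i := i))).le h1]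
  have h2 : ∀ r ∈ A, ∃ s ∈ B, r ≤ s := by
    rintro r ⟨m, a, b, hab, hdisj, rfl⟩
    set s : Finset ℝ := insert 0 (insert 1 ((Finset.univ.image a) ∪ (Finset.univ.image b)))
      with hsdef
    have hs0 : (0:ℝ) ∈ s := Finset.mem_insert_self _ _
    have hs1 : (1:ℝ) ∈ s := Finset.mem_insert_of_mem (Finset.mem_insert_self _ _)
    have hsa : ∀ j, a j ∈ s := fun j => Finset.mem_insert_of_mem (Finset.mem_insert_of_mem
      (Finset.mem_union_left _ (Finset.mem_image_of_mem a (Finset.mem_univ j))))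
    have hsb : ∀ j, b j ∈ s := fun j => Finset.mem_insert_of_mem (Finset.mem_insert_of_mem
      (Finset.mem_union_right _ (Finset.mem_image_of_mem b (Finset.mem_univ j))))
    have hmem : ∀ x ∈ s, 0 ≤ x ∧ x ≤ 1 := by
      intro x hx
      simp only [hsdef, Finset.mem_insert, Finset.mem_union, Finset.mem_image] at hx
      rcases hx with rfl | rfl | ⟨j, -, rfl⟩ | ⟨j, -, rfl⟩
      · exact ⟨le_rfl, zero_le_one⟩
      · exact ⟨zero_le_one, le_rfl⟩
      · exact ⟨(hab j).1, (hab j).2.1.le.trans (hab j).2.2⟩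
      · exact ⟨(hab j).1.trans (hab j).2.1.le, (hab j).2.2⟩
    have hpos : 0 < s.card := Finset.card_pos.2 ⟨0, hs0⟩
    set n := s.card - 1 with hndef
    have hcard : s.card = n + 1 := by omega
    set o := s.orderIsoOfFin hcard with hodef
    set t : Fin (n+1) → ℝ := fun i => (o i : ℝ) with htdef
    have ht : StrictMono t := fun i j h => by exact_mod_cast o.strictMono h
    have htmem : ∀ i, t i ∈ s := fun i => (o i).2
    have hts : ∀ (x) (hx : x ∈ s), t (o.symm ⟨x, hx⟩) = x := fun x hx => by
      simp [htdef]
    have ht0 : t 0 = 0 := by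
      refine le_antisymm ?_ (hmem _ (htmem 0)).1
      have h := ht.monotone (Fin.zero_le (o.symm ⟨0, hs0⟩))
      rwa [hts 0 hs0] at h
    have htl : t (Fin.last n) = 1 := by
      refine le_antisymm (hmem _ (htmem _)).2 ?_
      have h := ht.monotone (Fin.le_last (o.symm ⟨1, hs1⟩))
      rwa [hts 1 hs1] at h
    have hgap : ∀ (j : Fin m) (x), x ∈ s → x ∉ Set.Ioo (a j) (b j) := by
      intro j x hx hxIoo
      obtain ⟨haj, hjab, hbj⟩ := hab j
      simp only [hsdef, Finset.mem_insert, Finset.mem_union, Finset.mem_image] at hx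
      rcases hx with rfl | rfl | ⟨k, -, rfl⟩ | ⟨k, -, rfl⟩
      · exact absurd hxIoo.1 (not_lt.2 haj)
      · exact absurd hxIoo.2 (not_lt.2 hbj)
      · rcases eq_or_ne k j with rfl | hkj
        · exact lt_irrefl _ hxIoo.1
        · obtain ⟨hak, hkab, hbk⟩ := hab k
          have hmin : a k < min (b k) (b j) := lt_min hkab hxIoo.2
          have hy1 : a k < (a k + min (b k) (b j)) / 2 := by linarith
          have hy2 : (a k + min (b k) (b j)) / 2 < min (b k) (b j) := by linarith
          exact Set.disjoint_left.mp (hdisj hkj)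
            ⟨hy1, hy2.trans_le (min_le_left _ _)⟩
            ⟨hxIoo.1.trans hy1, hy2.trans_le (min_le_right _ _)⟩
      · rcases eq_or_ne k j with rfl | hkj
        · exact lt_irrefl _ hxIoo.2
        · obtain ⟨hak, hkab, hbk⟩ := hab k
          have hmax : max (a k) (a j) < b k := max_lt hkab hxIoo.1
          have hy1 : max (a k) (a j) < (max (a k) (a j) + b k) / 2 := by linarith
          have hy2 : (max (a k) (a j) + b k) / 2 < b k := by linarith
          exact Set.disjoint_left.mp (hdisj hkj)
            ⟨(le_max_left _ _).trans_lt hy1, hy2⟩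
            ⟨(le_max_right _ _).trans_lt hy1, hy2.trans hxIoo.2⟩
    have hseg : ∀ j : Fin m, ∃ i : Fin n, t i.castSucc = a j ∧ t i.succ = b j := by
      intro j
      obtain ⟨haj, hjab, hbj⟩ := hab j
      have hti0 : t (o.symm ⟨a j, hsa j⟩) = a j := hts _ (hsa j)
      have hi0last : o.symm ⟨a j, hsa j⟩ ≠ Fin.last n := by
        intro h
        rw [h, htl] at hti0
        exact absurd (hti0 ▸ hjab) (not_lt.2 hbj)
      obtain ⟨i, hi⟩ := Fin.exists_castSucc_eq.2 hi0last
      refine ⟨i, ?_, ?_⟩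
      · rw [hi]; exact hti0
      · have h1 : a j < t i.succ := by
          rw [← hti0, ← hi]; exact ht (Fin.castSucc_lt_succ (i := i))
        have h3 : b j ≤ t i.succ := by
          by_contra h
          push_neg at h
          exact hgap j _ (htmem _) ⟨h1, h⟩
        by_contra hne
        have h4 : b j < t i.succ := lt_of_le_of_ne h3 fun h => hne h.symm
        have hti1 : t (o.symm ⟨b j, hsb j⟩) = b j := hts _ (hsb j)
        have hlt1 : i.castSucc < o.symm ⟨b j, hsb j⟩ :=
          ht.lt_iff_lt.mp (by rw [hti1, hi, hti0]; exact hjab)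
        have hlt2 : o.symm ⟨b j, hsb j⟩ < i.succ := ht.lt_iff_lt.mp (by rw [hti1]; exact h4)
        rw [Fin.lt_def] at hlt1 hlt2
        simp only [Fin.coe_castSucc, Fin.val_succ] at hlt1 hlt2
        omega
    choose ι hι1 hι2 using hseg
    have hιinj : Function.Injective ι := by
      intro j j' h
      have haa : a j = a j' := by rw [← hι1 j, ← hι1 j', h]
      by_contra hne
      obtain ⟨-, hjab, -⟩ := hab j
      obtain ⟨-, hjab', -⟩ := hab j'
      have hmin : a j < min (b j) (b j') := lt_min hjab (haa ▸ hjab')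
      have hy1 : a j < (a j + min (b j) (b j')) / 2 := by linarith
      have hy2 : (a j + min (b j) (b j')) / 2 < min (b j) (b j') := by linarith
      exact Set.disjoint_left.mp (hdisj hne)
        ⟨hy1, hy2.trans_le (min_le_left _ _)⟩
        ⟨haa ▸ hy1, hy2.trans_le (min_le_right _ _)⟩
    refine ⟨‖∑ i : Fin n, (F (t i.succ) - F (t i.castSucc)) • e (i : ℕ)‖,
      ⟨n, t, ht, ht0, htl, rfl⟩, ?_⟩
    have hcoeff : ∀ j, (∫ x in Set.Ioo (a j) (b j), f x)
        = F (t (ι j).succ) - F (t (ι j).castSucc) := by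
      intro j
      rw [hι1, hι2]
      exact JFaux.intF hf (hab j).1 (hab j).2.1.le (hab j).2.2
    calc ‖∑ j : Fin m, (∫ x in Set.Ioo (a j) (b j), f x) • e (j : ℕ)‖
        = ‖∑ j : Fin m, (F (t (ι j).succ) - F (t (ι j).castSucc)) • e (j : ℕ)‖ := by
          congr 1
          exact Finset.sum_congr rfl fun j _ => by rw [hcoeff]
      _ = ‖∑ j : Fin m, (F (t (ι j).succ) - F (t (ι j).castSucc)) • e ((ι j : ℕ))‖ :=
          (JFaux.perm_norm e hsym _ (fun j => ((ι j : ℕ)))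
            (fun j j' h => hιinj (Fin.val_injective h))).symm
      _ = ‖∑ i ∈ Finset.univ.image ι, (F (t i.succ) - F (t i.castSucc)) • e (i : ℕ)‖ := by
          rw [Finset.sum_image (fun x _ y _ h => hιinj h)]
      _ ≤ _ := JFaux.drop_norm e hsym _ _
  have hA0 : (0:ℝ) ∈ A := by
    refine ⟨0, Fin.elim0, Fin.elim0, fun j => j.elim0, fun i => i.elim0, ?_⟩
    simp
  have hAne : A.Nonempty := ⟨0, hA0⟩
  have hBne : B.Nonempty := by
    obtain ⟨s', hs', -⟩ := h2 0 hA0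
    exact ⟨s', hs'⟩
  by_cases hbd : BddAbove A
  · refine le_antisymm ?_ (csSup_le_csSup hbd hBne hBA)
    refine csSup_le hAne fun r hr => ?_
    obtain ⟨s', hs', hle⟩ := h2 r hr
    exact hle.trans (le_csSup (hbd.mono hBA) hs')
  · have hbdB : ¬ BddAbove B := by
      intro ⟨M, hM⟩
      exact hbd ⟨M, fun r hr => by
        obtain ⟨s', hs', hle⟩ := h2 r hr
        exact hle.trans (hM hs')⟩
    rw [Real.sSup_of_not_bddAbove hbd, Real.sSup_of_not_bddAbove hbdB]


end
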